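/- Let R be a Noetherian ring, C = ⨁_{e≥0} C_e an ℕ-graded ring with C_0 = R satisfying rφ = φ r^{p^e} for homogeneous φ of degree e (a Cartier algebra), and M a C-module that is finitely generated over R. Then the descending chain C_+ M ⊇ C_+^2 M ⊇ C_+^3 M ⊇ ⋯ stabilizes, where C_+ = ⨁_{e≥1} C_e. -/
import Mathlib

variable {R : Type*} [CommRing R] {M : Type*} [AddCommGroup M] [Module R M]

/-- One application of the positive part of a Cartier algebra `C` to a submodule:
the submodule generated by `φ(N)` for all `φ ∈ C_e`, `e ≥ 1`. Iterating `h` times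
yields `C_+^h M`. -/
def cPlusStep (C : ℕ → Set (M →+ M)) (N : Submodule R M) : Submodule R M :=
  Submodule.span R (⋃ e ∈ Set.Ici 1, ⋃ φ ∈ C e, ⇑φ '' (N : Set M))

namespace CartierStabAux

variable {C : ℕ → Set (M →+ M)}

lemma mem_cPlusStep {e : ℕ} (he : 1 ≤ e) {φ : M →+ M} (hφ : φ ∈ C e)
    {N : Submodule R M} {x : M} (hx : x ∈ N) : φ x ∈ cPlusStep C N :=
  Submodule.subset_span <| Set.mem_biUnion (Set.mem_Ici.2 he) <|
    Set.mem_biUnion hφ ⟨x, hx, rfl⟩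

lemma cPlusStep_le {N K : Submodule R M}
    (h : ∀ e, 1 ≤ e → ∀ φ ∈ C e, ∀ x ∈ N, φ x ∈ K) : cPlusStep C N ≤ K := by
  rw [cPlusStep, Submodule.span_le]
  rintro y hy
  simp only [Set.mem_iUnion, Set.mem_Ici, Set.mem_image, SetLike.mem_coe] at hy
  obtain ⟨e, he, φ, hφ, x, hx, rfl⟩ := hy
  exact h e he φ hφ x hx

lemma cPlusStep_mono : Monotone (cPlusStep (R := R) C) := fun _ _ h =>
  cPlusStep_le (fun _ he _ hφ _ hx => mem_cPlusStep he hφ (h hx))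

lemma cPlusStep_induction {N : Submodule R M} {P : M → Prop}
    (hgen : ∀ e, 1 ≤ e → ∀ φ ∈ C e, ∀ x ∈ N, P (φ x))
    (h0 : P 0) (hadd : ∀ x y, P x → P y → P (x + y))
    (hsm : ∀ (r : R) (x), P x → P (r • x)) :
    ∀ x ∈ cPlusStep C N, P x := by
  have hle : cPlusStep C N ≤
      ({ carrier := setOf P
         add_mem' := fun ha hb => hadd _ _ ha hb
         zero_mem' := h0
         smul_mem' := fun r x hx => hsm r x hx } : Submodule R M) :=
    cPlusStep_le hgen
  exact fun x hx => hle hx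

def primeSat (pr : Ideal R) (hpr : pr.IsPrime) (X : Submodule R M) : Submodule R M where
  carrier := {m | ∃ c, c ∉ pr ∧ c • m ∈ X}
  add_mem' := by
    rintro a b ⟨c, hc, hca⟩ ⟨d, hd, hdb⟩
    refine ⟨c * d, fun h => ((hpr.mem_or_mem h).elim hc hd), ?_⟩
    rw [smul_add]
    exact X.add_mem (by rw [mul_comm, mul_smul]; exact X.smul_mem d hca)
      (by rw [mul_smul]; exact X.smul_mem c hdb)
  zero_mem' := ⟨1, (Ideal.ne_top_iff_one pr).1 hpr.ne_top, by simp⟩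
  smul_mem' := by
    rintro r a ⟨c, hc, hca⟩
    exact ⟨c, hc, by rw [smul_comm]; exact X.smul_mem r hca⟩

lemma le_primeSat {pr : Ideal R} (hpr : pr.IsPrime) (X : Submodule R M) :
    X ≤ primeSat pr hpr X := fun m hm =>
  ⟨1, (Ideal.ne_top_iff_one pr).1 hpr.ne_top, by simpa using hm⟩

lemma primeSat_mono {pr : Ideal R} (hpr : pr.IsPrime) {X Y : Submodule R M} (h : X ≤ Y) :
    primeSat pr hpr X ≤ primeSat pr hpr Y := by
  rintro m ⟨c, hc, hcm⟩; exact ⟨c, hc, h hcm⟩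

lemma primeSat_primeSat {pr : Ideal R} (hpr : pr.IsPrime) (X : Submodule R M) :
    primeSat pr hpr (primeSat pr hpr X) = primeSat pr hpr X := by
  refine le_antisymm ?_ (le_primeSat hpr _)
  rintro m ⟨c, hc, d, hd, hdcm⟩
  refine ⟨d * c, fun h => ((hpr.mem_or_mem h).elim hd hc), ?_⟩
  rw [mul_smul]; exact hdcm

variable [IsNoetherianRing R] [Module.Finite R M]

theorem sat_chain_stab {pr : Ideal R} (hpr : pr.IsPrime) (A W : Submodule R M)
    (hWsat : primeSat pr hpr W = W)
    (K : ℕ) (hKW : ∀ x ∈ A, ∀ r ∈ pr ^ K, r • x ∈ W)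
    (X : ℕ → Submodule R M) (hdesc : ∀ n, X (n + 1) ≤ X n)
    (hsat : ∀ n, primeSat pr hpr (X n) = X n)
    (hXW : ∀ n, W ≤ X n) (hXA : ∀ n, X n ≤ primeSat pr hpr A) :
    ∃ n₀, ∀ n, n₀ ≤ n → X n = X n₀ := by
  classical
  haveI : Nontrivial (R ⧸ pr) := Ideal.Quotient.nontrivial_iff.mpr hpr.ne_top
  have hXle : ∀ {m n : ℕ}, m ≤ n → X n ≤ X m := fun h => (antitone_nat_of_succ_le hdesc) h
  -- the filtration
  set G : ℕ → Submodule R M := fun i => primeSat pr hpr (pr ^ i • A ⊔ W) with hGdef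
  have hAG0 : primeSat pr hpr A ≤ G 0 := by
    apply primeSat_mono
    have h0 : A ≤ pr ^ 0 • A := by
      rw [pow_zero, Ideal.one_eq_top, Submodule.top_smul]
    exact le_trans h0 le_sup_left
  have hGK : G K ≤ W := by
    rw [← hWsat]
    apply primeSat_mono
    refine sup_le ?_ le_rfl
    exact Submodule.smul_le.2 fun r hr x hx => hKW x hx r hr
  have hGdesc : ∀ {i j : ℕ}, i ≤ j → G j ≤ G i := by
    intro i j hij
    apply primeSat_mono
    exact sup_le_sup_right (Submodule.smul_mono_left (Ideal.pow_le_pow_right hij)) _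
  have hsmulkey : ∀ i : ℕ, pr • (pr ^ i • A) = pr ^ (i + 1) • A := by
    intro i
    rw [← Submodule.smul_assoc, Ideal.smul_eq_mul, ← pow_succ']
  have hpG : ∀ (i : ℕ), ∀ r ∈ pr, ∀ m ∈ G i, r • m ∈ G (i + 1) := by
    rintro i r hr m ⟨c, hc, hcm⟩
    refine ⟨c, hc, ?_⟩
    rw [smul_comm c r m]
    rcases Submodule.mem_sup.1 hcm with ⟨u, hu, w, hw, huw⟩
    rw [← huw, smul_add]
    refine Submodule.add_mem _ ?_ ?_
    · exact Submodule.mem_sup_left ((hsmulkey i) ▸ Submodule.smul_mem_smul hr hu)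
    · exact Submodule.mem_sup_right (W.smul_mem r hw)
  -- finite generating families for the filtration steps
  have hfg : ∀ i : ℕ, ∃ (t : ℕ) (w : Fin t → M), Submodule.span R (Set.range w) = G i :=
    fun i => Submodule.fg_iff_exists_fin_generating_family.mp (IsNoetherian.noetherian (G i))
  choose t w hw using hfg
  have hwmem : ∀ i l, w i l ∈ G i := fun i l => by
    rw [← hw i]; exact Submodule.subset_span (Set.mem_range_self l)
  -- independence predicate
  set Ind : ℕ → Submodule R M → ℕ → Prop := fun i Y k =>
    ∃ v : Fin k → M, (∀ j, v j ∈ Y) ∧ (∀ j, v j ∈ G i) ∧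
      ∀ c : Fin k → R, (∑ j, c j • v j) ∈ G (i + 1) → ∀ j, c j ∈ pr with hIndDef
  have hInd0 : ∀ i Y, Ind i Y 0 :=
    fun i Y => ⟨Fin.elim0, fun j => j.elim0, fun j => j.elim0, fun c _ j => j.elim0⟩
  have hbound : ∀ i Y k, Ind i Y k → k ≤ t i := by
    rintro i Y k ⟨v, hvY, hvG, hvInd⟩
    have ha : ∀ j, ∃ cf : Fin (t i) → R, ∑ l, cf l • w i l = v j := by
      intro j
      have : v j ∈ Submodule.span R (Set.range (w i)) := by rw [hw i]; exact hvG j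
      exact (Submodule.mem_span_range_iff_exists_fun R).1 this
    choose aa haa using ha
    set abar : Fin k → (Fin (t i) → R ⧸ pr) :=
      fun j l => Ideal.Quotient.mk pr (aa j l) with habar
    have hli : LinearIndependent (R ⧸ pr) abar := by
      rw [Fintype.linearIndependent_iff]
      intro g hg
      have hgl : ∀ j, ∃ y, Ideal.Quotient.mk pr y = g j :=
        fun j => Ideal.Quotient.mk_surjective _
      choose gl hglspec using hgl
      have hl : ∀ l, (∑ j, gl j * aa j l) ∈ pr := by
        intro l
        have h1 : (∑ j, g j • abar j) l = 0 := by rw [hg]; rfl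
        have h2 : ∑ j, g j * abar j l = 0 := by
          simpa [Finset.sum_apply, Pi.smul_apply, smul_eq_mul] using h1
        have h3 : (Ideal.Quotient.mk pr) (∑ j, gl j * aa j l) = 0 := by
          rw [map_sum]
          calc ∑ j, (Ideal.Quotient.mk pr) (gl j * aa j l)
              = ∑ j, g j * abar j l := by
                refine Finset.sum_congr rfl fun j _ => ?_
                rw [map_mul, hglspec j]
            _ = 0 := h2
        exact Ideal.Quotient.eq_zero_iff_mem.1 h3
      have hsum : ∑ j, gl j • v j = ∑ l, (∑ j, gl j * aa j l) • w i l := by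
        calc ∑ j, gl j • v j
            = ∑ j, ∑ l, (gl j * aa j l) • w i l := by
              refine Finset.sum_congr rfl fun j _ => ?_
              rw [← haa j, Finset.smul_sum]
              exact Finset.sum_congr rfl fun l _ => smul_smul _ _ _
          _ = ∑ l, ∑ j, (gl j * aa j l) • w i l := Finset.sum_comm
          _ = ∑ l, (∑ j, gl j * aa j l) • w i l := by
              exact Finset.sum_congr rfl fun l _ => (Finset.sum_smul).symm
      have hmemG : (∑ j, gl j • v j) ∈ G (i + 1) := by
        rw [hsum]
        exact Submodule.sum_mem _ fun l _ => hpG i _ (hl l) _ (hwmem i l)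
      have hglpr : ∀ j, gl j ∈ pr := hvInd gl hmemG
      intro j
      rw [← hglspec j, Ideal.Quotient.eq_zero_iff_mem]
      exact hglpr j
    have hcard := (Pi.basisFun (R ⧸ pr) (Fin (t i))).card_le_card_of_linearIndependent hli
    simpa using hcard
  -- the rank function
  set rk : ℕ → Submodule R M → ℕ := fun i Y => Nat.findGreatest (Ind i Y) (t i) with hrkdef
  have hrk_spec : ∀ i Y, Ind i Y (rk i Y) :=
    fun i Y => Nat.findGreatest_spec (Nat.zero_le _) (hInd0 i Y)
  have hrk_mono : ∀ (i : ℕ) {Y Z : Submodule R M}, Y ≤ Z → rk i Y ≤ rk i Z := by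
    intro i Y Z hYZ
    refine Nat.findGreatest_mono (fun k hk => ?_) le_rfl
    obtain ⟨v, hvY, hvG, hvInd⟩ := hk
    exact ⟨v, fun j => hYZ (hvY j), hvG, hvInd⟩
  set σ : Submodule R M → ℕ := fun Y => ∑ i ∈ Finset.range (K + 1), rk i Y with hσdef
  -- strict inequality for strictly nested saturated submodules
  have hstrict : ∀ Y Z : Submodule R M, primeSat pr hpr Y = Y → primeSat pr hpr Z = Z →
      W ≤ Y → Y ≤ Z → Z ≤ G 0 → Y ≠ Z → σ Y < σ Z := by
    intro Y Z hYsat hZsat hWY hYZ hZG0 hne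
    obtain ⟨y0, hy0Z, hy0Y⟩ : ∃ y, y ∈ Z ∧ y ∉ Y := by
      by_contra hcon
      push_neg at hcon
      exact hne (le_antisymm hYZ hcon)
    set P' : ℕ → Prop := fun i => ∃ y, y ∈ Z ∧ y ∉ Y ∧ y ∈ G i with hP'def
    have hP'0 : P' 0 := ⟨y0, hy0Z, hy0Y, hZG0 hy0Z⟩
    set istar := Nat.findGreatest P' K with histar
    obtain ⟨ys, hysZ, hysY, hysG⟩ : P' istar := Nat.findGreatest_spec (Nat.zero_le _) hP'0
    have histarK : istar < K := by
      rcases Nat.lt_or_ge istar K with h | h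
      · exact h
      · exfalso
        have : istar = K := le_antisymm (Nat.findGreatest_le _) h
        exact hysY (hWY (hGK (this ▸ hysG)))
    obtain ⟨v, hvY, hvG, hvInd⟩ := hrk_spec istar Y
    -- extended family
    set v' : Fin (rk istar Y + 1) → M := Fin.cons ys v with hv'def
    have hIndZ : Ind istar Z (rk istar Y + 1) := by
      refine ⟨v', ?_, ?_, ?_⟩
      · intro j
        refine Fin.cases ?_ ?_ j
        · simpa [hv'def] using hysZ
        · intro j'; simpa [hv'def] using hYZ (hvY j')
      · intro j
        refine Fin.cases ?_ ?_ j
        · simpa [hv'def] using hysG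
        · intro j'; simpa [hv'def] using hvG j'
      · intro c hc j
        have hsum : ∑ j, c j • v' j = c 0 • ys + ∑ j' : Fin (rk istar Y), c j'.succ • v j' := by
          rw [Fin.sum_univ_succ]
          simp [hv'def]
        rw [hsum] at hc
        by_cases hc0 : c 0 ∈ pr
        · have htail : (∑ j' : Fin (rk istar Y), c j'.succ • v j') ∈ G (istar + 1) := by
            have h1 : c 0 • ys ∈ G (istar + 1) := hpG istar _ hc0 _ hysG
            have := Submodule.sub_mem _ hc h1
            simpa using this
          have hmem := hvInd (fun j' => c j'.succ) htail
          refine Fin.cases ?_ ?_ j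
          · exact hc0
          · intro j'; exact hmem j'
        · exfalso
          set g := c 0 • ys + ∑ j' : Fin (rk istar Y), c j'.succ • v j' with hgdef
          have hgZ : g ∈ Z := by
            refine Submodule.add_mem _ (Z.smul_mem _ hysZ) ?_
            exact Submodule.sum_mem _ fun j' _ => Z.smul_mem _ (hYZ (hvY j'))
          by_cases hgY : g ∈ Y
          · have : c 0 • ys ∈ Y := by
              have h2 : (∑ j' : Fin (rk istar Y), c j'.succ • v j') ∈ Y :=
                Submodule.sum_mem _ fun j' _ => Y.smul_mem _ (hvY j')
              have := Submodule.sub_mem _ hgY h2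
              simpa [hgdef] using this
            exact hysY (hYsat ▸ (⟨c 0, hc0, this⟩ : ys ∈ primeSat pr hpr Y))
          · have hP'succ : P' (istar + 1) := ⟨g, hgZ, hgY, hc⟩
            exact Nat.findGreatest_is_greatest (Nat.lt_succ_self istar) histarK hP'succ
    have hle1 : rk istar Y + 1 ≤ t istar := hbound _ _ _ hIndZ
    have hle2 : rk istar Y + 1 ≤ rk istar Z := Nat.le_findGreatest hle1 hIndZ
    refine Finset.sum_lt_sum (fun i _ => hrk_mono i hYZ) ⟨istar, ?_, ?_⟩
    · exact Finset.mem_range.2 (Nat.lt_succ_of_lt histarK)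
    · omega
  -- conclusion via minimality of σ along the chain
  set σX : ℕ → ℕ := fun n => σ (X n) with hσX
  have hσanti : ∀ {m n : ℕ}, m ≤ n → σX n ≤ σX m :=
    fun h => Finset.sum_le_sum (fun i _ => hrk_mono i (hXle h))
  have hne : (Set.range σX).Nonempty := ⟨σX 0, ⟨0, rfl⟩⟩
  obtain ⟨n₀, hn₀⟩ : ∃ n₀, σX n₀ = sInf (Set.range σX) := Nat.sInf_mem hne
  have hσconst : ∀ n, n₀ ≤ n → σX n = σX n₀ := by
    intro n hn
    refine le_antisymm (hσanti hn) ?_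
    rw [hn₀]
    exact Nat.sInf_le ⟨n, rfl⟩
  refine ⟨n₀, ?_⟩
  intro n hn
  induction n, hn using Nat.le_induction with
  | base => rfl
  | succ n hn ih =>
    have heq : X (n + 1) = X n := by
      by_contra hneq
      have := hstrict (X (n + 1)) (X n) (hsat _) (hsat _) (hXW _) (hdesc n)
        ((hXA n).trans hAG0) hneq
      have h1 : σ (X (n + 1)) = σ (X n) := by
        have a1 : σX (n + 1) = σX n₀ := hσconst _ (by omega)
        have a2 : σX n = σX n₀ := hσconst _ hn
        exact a1.trans a2.symm
      rw [h1] at this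
      exact lt_irrefl _ this
    rw [heq, ih]

theorem blickle_main (p : ℕ) (hp2 : 2 ≤ p) (C : ℕ → Set (M →+ M))
    (hsemi : ∀ e : ℕ, ∀ φ ∈ C e, ∀ (r : R) (m : M), φ (r ^ p ^ e • m) = r • φ m) :
    ∀ (J : Ideal R) (A : Submodule R M),
      (∀ e, 1 ≤ e → ∀ φ ∈ C e, ∀ x ∈ A, φ x ∈ A) →
      J ≤ (⨅ k : ℕ, (cPlusStep C)^[k] A).colon A →
      ∃ k₀ : ℕ, ∀ k, k₀ ≤ k → (cPlusStep C)^[k] A = (cPlusStep C)^[k₀] A := by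
  classical
  have wf : WellFounded ((· > ·) : Ideal R → Ideal R → Prop) :=
    isNoetherian_iff.mp (inferInstance : IsNoetherian R R)
  intro J
  refine WellFounded.induction (C := fun J : Ideal R => ∀ A : Submodule R M,
      (∀ e, 1 ≤ e → ∀ φ ∈ C e, ∀ x ∈ A, φ x ∈ A) →
      J ≤ (⨅ k : ℕ, (cPlusStep C)^[k] A).colon A →
      ∃ k₀ : ℕ, ∀ k, k₀ ≤ k → (cPlusStep C)^[k] A = (cPlusStep C)^[k₀] A) wf J ?_
  intro J ih A hA hJle
  set f : Submodule R M → Submodule R M := cPlusStep C with hfdef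
  set N : ℕ → Submodule R M := fun n => f^[n] A with hNdef
  have hN0 : N 0 = A := rfl
  have hNsucc : ∀ n, N (n + 1) = f (N n) := fun n => Function.iterate_succ_apply' f n A
  have hfmono : Monotone f := cPlusStep_mono
  have hfA : f A ≤ A := cPlusStep_le hA
  have hNdesc : ∀ n, N (n + 1) ≤ N n := by
    intro n
    have h1 : N (n + 1) = f^[n] (f A) := Function.iterate_succ_apply f n A
    rw [h1]
    exact (hfmono.iterate n) hfA
  have hNle : ∀ {m n : ℕ}, m ≤ n → N n ≤ N m := fun h => (antitone_nat_of_succ_le hNdesc) h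
  have hNA : ∀ n, N n ≤ A := fun n => hN0 ▸ hNle (Nat.zero_le n)
  have hNstable : ∀ n, ∀ e, 1 ≤ e → ∀ φ ∈ C e, ∀ x ∈ N n, φ x ∈ N n := by
    intro n e he φ hφ x hx
    have h1 : φ x ∈ f (N n) := mem_cPlusStep he hφ hx
    exact hNdesc n (by rwa [hNsucc])
  by_cases hstab : ∃ n, N (n + 1) = N n
  · obtain ⟨n, hn⟩ := hstab
    refine ⟨n, ?_⟩
    intro k hk
    induction k, hk using Nat.le_induction with
    | base => rfl
    | succ k hk ihk =>
      calc N (k + 1) = f (N k) := hNsucc k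
        _ = f (N n) := congrArg f ihk
        _ = N (n + 1) := (hNsucc n).symm
        _ = N n := hn
  · push_neg at hstab
    exfalso
    set T : Submodule R M := ⨅ k : ℕ, N k with hTdef
    have hTN : ∀ n, T ≤ N n := fun n => iInf_le _ n
    -- ascending chain of colon ideals
    have hstep : ∀ n : ℕ, (N (n + 1)).colon (N n) ≤ (N (n + 2)).colon (N (n + 1)) := by
      intro n r hr
      rw [Submodule.mem_colon]
      intro y hy
      rw [hNsucc n] at hy
      rw [hNsucc (n + 1)]
      refine cPlusStep_induction (P := fun z => r • z ∈ f (N (n + 1))) ?_ ?_ ?_ ?_ y hy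
      · intro e he φ hφ x hx
        have e1 : r • φ x = φ (r ^ p ^ e • x) := (hsemi e φ hφ r x).symm
        have e2 : r ^ p ^ e • x = r ^ (p ^ e - 1) • (r • x) := by
          have hq1 : 1 ≤ p ^ e := Nat.one_le_pow e p (by omega)
          rw [smul_smul]
          congr 1
          rw [← pow_succ]
          congr 1
          omega
        have h3 : r • x ∈ N (n + 1) := Submodule.mem_colon.1 hr x hx
        have h4 : r ^ (p ^ e - 1) • (r • x) ∈ N (n + 1) := Submodule.smul_mem _ _ h3
        rw [e1, e2]
        exact mem_cPlusStep he hφ h4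
      · simpa using Submodule.zero_mem (f (N (n + 1)))
      · intro x y hx hy; rw [smul_add]; exact Submodule.add_mem _ hx hy
      · intro c x hx; rw [smul_comm]; exact Submodule.smul_mem _ _ hx
    have hamono : Monotone (fun n => (N (n + 1)).colon (N n)) := monotone_nat_of_le_succ hstep
    obtain ⟨n₁, hn₁⟩ := monotone_stabilizes_iff_noetherian.mpr
      (inferInstance : IsNoetherian R R) ⟨fun n => (N (n + 1)).colon (N n), hamono⟩
    have hn₁' : ∀ m, n₁ ≤ m → (N (n₁ + 1)).colon (N n₁) = (N (m + 1)).colon (N m) :=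
      fun m hm => hn₁ m hm
    set IA : Ideal R := T.colon A with hIAdef
    have hIAne : IA ≠ ⊤ := by
      intro htop
      have h1 : ∀ x ∈ A, x ∈ T := by
        intro x hx
        have h2 : (1 : R) ∈ IA := htop ▸ Submodule.mem_top
        simpa using Submodule.mem_colon.1 h2 x hx
      have h2 : N 1 = N 0 := le_antisymm (hNdesc 0)
        (fun x hx => hTN 1 (h1 x (hN0 ▸ hx)))
      exact hstab 0 h2
    obtain ⟨mI, hmI, hImI⟩ := Ideal.exists_le_maximal IA hIAne
    haveI := hmI.isPrime
    obtain ⟨pr, hprmem, hprle⟩ := Ideal.exists_minimalPrimes_le hImI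
    obtain ⟨⟨hprPrime, hIApr⟩, hprmin⟩ := hprmem
    have hone : (1 : R) ∉ pr := (Ideal.ne_top_iff_one pr).1 hprPrime.ne_top
    -- minimal prime: powers escape via a multiplier outside pr
    have L9 : ∀ r ∈ pr, ∃ (c : R) (k : ℕ), c ∉ pr ∧ c * r ^ k ∈ IA := by
      intro r hr
      by_contra hcon
      push_neg at hcon
      set S : Submonoid R :=
        { carrier := {x | ∃ c k, c ∉ pr ∧ x = c * r ^ k}
          one_mem' := ⟨1, 0, hone, by ring⟩
          mul_mem' := by
            rintro a b ⟨c, k, hc, rfl⟩ ⟨d, l, hd, rfl⟩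
            exact ⟨c * d, k + l, fun h => ((hprPrime.mem_or_mem h).elim hc hd), by ring⟩ }
        with hSdef
      have hdisj : Disjoint (IA : Set R) (S : Set R) := by
        rw [Set.disjoint_left]
        rintro x hxI ⟨c, k, hc, rfl⟩
        exact hcon c k hc hxI
      obtain ⟨q, hq, hIq, hqS⟩ := Ideal.exists_le_prime_disjoint IA S hdisj
      have hqpr : q ≤ pr := by
        intro x hxq
        by_contra hx
        exact Set.disjoint_left.1 hqS hxq ⟨x, 0, hx, by ring⟩
      have hrq : r ∉ q := fun hrq => Set.disjoint_left.1 hqS hrq ⟨1, 1, hone, by ring⟩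
      exact hrq (hprmin ⟨hq, hIq⟩ hqpr hr)
    set W : Submodule R M := primeSat pr hprPrime T with hWdef
    have hWsat : primeSat pr hprPrime W = W := primeSat_primeSat hprPrime T
    have hrad : pr ≤ (W.colon A).radical := by
      intro r hr
      obtain ⟨c, k, hc, hck⟩ := L9 r hr
      rw [Ideal.mem_radical_iff]
      refine ⟨k, ?_⟩
      rw [Submodule.mem_colon]
      intro x hx
      refine ⟨c, hc, ?_⟩
      rw [smul_smul]
      exact Submodule.mem_colon.1 hck x hx
    obtain ⟨K, hK⟩ := Ideal.exists_pow_le_of_le_radical_of_fg hrad (IsNoetherian.noetherian pr)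
    have hKW : ∀ x ∈ A, ∀ r ∈ pr ^ K, r • x ∈ W := fun x hx r hr =>
      Submodule.mem_colon.1 (hK hr) x hx
    obtain ⟨n₀, hn₀⟩ := sat_chain_stab hprPrime A W hWsat K hKW
      (fun n => primeSat pr hprPrime (N n))
      (fun n => primeSat_mono hprPrime (hNdesc n))
      (fun n => primeSat_primeSat hprPrime _)
      (fun n => primeSat_mono hprPrime (hTN n))
      (fun n => primeSat_mono hprPrime (hNA n))
    set n₂ := max n₀ n₁ with hn₂def
    have hXeq : primeSat pr hprPrime (N n₂) = primeSat pr hprPrime (N (n₂ + 1)) := by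
      rw [hn₀ n₂ (le_max_left _ _), hn₀ (n₂ + 1) (le_trans (le_max_left _ _) (Nat.le_succ _))]
    have hsub : N n₂ ≤ primeSat pr hprPrime (N (n₂ + 1)) := fun x hx =>
      hXeq ▸ (le_primeSat hprPrime (N n₂)) hx
    obtain ⟨S, hSspan⟩ := (IsNoetherian.noetherian (N n₂) : (N n₂).FG)
    have hyP : ∀ y ∈ S, ∃ c, c ∉ pr ∧ c • y ∈ N (n₂ + 1) := by
      intro y hy
      have hyN : y ∈ N n₂ := by rw [← hSspan]; exact Submodule.subset_span hy
      exact hsub hyN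
    choose! cc hcc1 hcc2 using hyP
    set s : R := ∏ y ∈ S, cc y with hsdef
    have hsnot : s ∉ pr :=
      Finset.prod_induction cc (fun x => x ∉ pr)
        (fun a b ha hb h => ((hprPrime.mem_or_mem h).elim ha hb)) hone hcc1
    have hsy : ∀ y ∈ S, s • y ∈ N (n₂ + 1) := by
      intro y hy
      have h1 : s = (∏ y' ∈ S.erase y, cc y') * cc y := (Finset.prod_erase_mul S _ hy).symm
      rw [h1, mul_smul]
      exact Submodule.smul_mem _ _ (hcc2 y hy)
    have hsN : s ∈ (N (n₂ + 1)).colon (N n₂) := by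
      rw [Submodule.mem_colon]
      intro x hx
      rw [← hSspan] at hx
      refine Submodule.span_induction (p := fun x _ => s • x ∈ N (n₂ + 1))
        (fun y hy => hsy y hy)
        (by show s • (0 : M) ∈ N (n₂ + 1); rw [smul_zero]; exact Submodule.zero_mem _)
        (fun x y _ _ hx hy => by
          show s • (x + y) ∈ N (n₂ + 1)
          rw [smul_add]; exact Submodule.add_mem _ hx hy)
        (fun c x _ hx => by
          show s • (c • x) ∈ N (n₂ + 1)
          rw [smul_comm]; exact Submodule.smul_mem _ _ hx) hx
    have hs : ∀ m, n₁ ≤ m → ∀ x ∈ N m, s • x ∈ N (m + 1) := by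
      intro m hm x hx
      have h2 : s ∈ (N (n₁ + 1)).colon (N n₁) := by
        rw [hn₁' n₂ (le_max_right _ _)]
        exact hsN
      have h1 : s ∈ (N (m + 1)).colon (N m) := by rw [← hn₁' m hm]; exact h2
      exact Submodule.mem_colon.1 h1 x hx
    -- the contraction argument
    have key : ∀ n, n₁ ≤ n → ∀ x ∈ N n₁, s • (s • x) ∈ N n := by
      intro n hn
      induction n, hn using Nat.le_induction with
      | base =>
        intro x hx
        have h1 : s • x ∈ N (n₁ + 1) := hs n₁ le_rfl x hx
        have h2 : s • (s • x) ∈ N (n₁ + 1 + 1) := hs (n₁ + 1) (by omega) _ h1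
        exact hNle (by omega) h2
      | succ n hn ihn =>
        have hz : ∀ z ∈ N (n₁ + 1), s • z ∈ N (n + 1) := by
          intro z hz
          rw [hNsucc n₁] at hz
          rw [hNsucc n]
          refine cPlusStep_induction (P := fun z => s • z ∈ f (N n)) ?_ ?_ ?_ ?_ z hz
          · intro e he φ hφ u hu
            have hq2 : 2 ≤ p ^ e := le_trans hp2 (Nat.le_self_pow (by omega) p)
            have e1 : s • φ u = φ (s ^ p ^ e • u) := (hsemi e φ hφ s u).symm
            have e2 : s ^ p ^ e • u = s ^ (p ^ e - 2) • (s • (s • u)) := by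
              have hscal : s ^ p ^ e = s ^ (p ^ e - 2) * (s * s) := by
                rw [← pow_two, ← pow_add]
                congr 1
                omega
              rw [hscal, mul_smul, mul_smul]
            have h3 : s • (s • u) ∈ N n := ihn u hu
            have h4 : s ^ (p ^ e - 2) • (s • (s • u)) ∈ N n := Submodule.smul_mem _ _ h3
            rw [e1, e2]
            exact mem_cPlusStep he hφ h4
          · simpa using Submodule.zero_mem (f (N n))
          · intro x y hx hy; rw [smul_add]; exact Submodule.add_mem _ hx hy
          · intro c x hx; rw [smul_comm]; exact Submodule.smul_mem _ _ hx
        intro x hx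
        exact hz (s • x) (hs n₁ le_rfl x hx)
    have hs2T : ∀ x ∈ N n₁, (s * s) • x ∈ T := by
      intro x hx
      refine (Submodule.mem_iInf _).2 fun k => ?_
      rcases le_or_gt n₁ k with h | h
      · rw [mul_smul]; exact key k h x hx
      · have h1 : (s * s) • x ∈ N n₁ := by rw [mul_smul]; exact key n₁ le_rfl x hx
        exact hNle (le_of_lt h) h1
    have hs2pr : s * s ∉ pr := fun h => (hprPrime.mem_or_mem h).elim hsnot hsnot
    set J₂ : Ideal R := IA ⊔ Ideal.span {s * s} with hJ₂def
    have hJle' : J ≤ IA := hJle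
    have hJ₂gt : J₂ > J := by
      have hle : J ≤ J₂ := le_trans hJle' le_sup_left
      have hmem : s * s ∈ J₂ := Submodule.mem_sup_right (Ideal.subset_span (Set.mem_singleton _))
      have hnot : s * s ∉ J := fun h => hs2pr (hIApr (hJle' h))
      exact lt_of_le_of_ne hle (fun h => hnot (h.symm ▸ hmem))
    have h1 : ∀ k, f^[k] (N n₁) = N (k + n₁) := fun k =>
      (Function.iterate_add_apply f k n₁ A).symm
    have hshift : (⨅ k : ℕ, f^[k] (N n₁)) = T := by
      refine le_antisymm ?_ ?_
      · refine le_iInf fun m => ?_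
        have h2 : (⨅ k : ℕ, f^[k] (N n₁)) ≤ f^[m] (N n₁) := iInf_le _ m
        rw [h1 m] at h2
        exact le_trans h2 (hNle (Nat.le_add_right m n₁))
      · refine le_iInf fun k => ?_
        rw [h1 k]
        exact hTN (k + n₁)
    have hJ₂le : J₂ ≤ (⨅ k : ℕ, f^[k] (N n₁)).colon (N n₁) := by
      rw [hshift]
      refine sup_le ?_ ?_
      · exact Submodule.colon_mono le_rfl (hNA n₁)
      · rw [Ideal.span_le]
        intro x hx
        rw [Set.mem_singleton_iff] at hx
        subst hx
        exact SetLike.mem_coe.2 (Submodule.mem_colon.2 (fun y hy => hs2T y hy))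
    obtain ⟨k₀, hk₀⟩ := ih J₂ hJ₂gt (N n₁) (hNstable n₁) hJ₂le
    have hcontr := hk₀ (k₀ + 1) (Nat.le_succ k₀)
    rw [h1, h1] at hcontr
    have hfin : N (k₀ + n₁ + 1) = N (k₀ + n₁) := by
      have e : k₀ + 1 + n₁ = k₀ + n₁ + 1 := by omega
      rw [← e]
      exact hcontr
    exact hstab (k₀ + n₁) hfin

end CartierStabAux

/-- Blickle's stabilization: for a Noetherian ring `R` of characteristic `p`, a Cartier
algebra `C` (with `C_0 = R`, encoded by the semilinearity and composition rules) acting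
on a finitely generated `R`-module `M`, the descending chain
`C_+ M ⊇ C_+² M ⊇ ⋯` stabilizes. -/
theorem cartier_chain_stabilizes (p : ℕ) (hp : p.Prime) [IsNoetherianRing R] [CharP R p]
    [Module.Finite R M] (C : ℕ → Set (M →+ M))
    (hsemi : ∀ e : ℕ, ∀ φ ∈ C e, ∀ (r : R) (m : M), φ (r ^ p ^ e • m) = r • φ m)
    (hadd : ∀ e : ℕ, ∀ φ ∈ C e, ∀ ψ ∈ C e, φ + ψ ∈ C e)
    (hsmul : ∀ e : ℕ, ∀ φ ∈ C e, ∀ r : R,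
      (AddMonoidHom.mk' (fun m => r • φ m) (by intro x y; simp [map_add])) ∈ C e)
    (hcomp : ∀ e e' : ℕ, ∀ φ ∈ C e, ∀ ψ ∈ C e', φ.comp ψ ∈ C (e + e')) :
    ∃ h₀ : ℕ, ∀ h : ℕ, h₀ ≤ h →
      (cPlusStep C)^[h] (⊤ : Submodule R M) = (cPlusStep C)^[h₀] (⊤ : Submodule R M) :=
  CartierStabAux.blickle_main p hp.two_le C hsemi ⊥ ⊤
    (fun _ _ _ _ _ _ => Submodule.mem_top) bot_le
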